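/- Let M : ℝ → ℝ be the moment generating function of a gamma distribution with shape k > 0 and rate ν > 0, i.e., M(λ) = (1 - λ/ν)^(-k) for λ < ν. Then for S₀ > 0 the function h(S) = S₀ · M'(M⁻¹(S/S₀)) satisfies h(S) = (k/ν) · S · (S/S₀)^(1/k) for all S with 0 < S ≤ S₀. -/
import Mathlib


/-- Transmission function from gamma-distributed susceptibility
(Equation (gd1)): if M is the mgf of a gamma distribution with shape `k` and
rate `ν`, i.e. `M λ = (1 - λ/ν)^(-k)` for `λ < ν`, and `Minv` is its inverse
on `(0,1]`, then `h S = S₀ * M'(Minv (S/S₀)) = (k/ν) * S * (S/S₀)^(1/k)`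
for `0 < S ≤ S₀`. -/
theorem gamma_transmission_function
    (k ν S₀ : ℝ) (hk : 0 < k) (hν : 0 < ν) (hS₀ : 0 < S₀)
    (M Minv : ℝ → ℝ)
    (hM : ∀ l : ℝ, l < ν → M l = (1 - l / ν) ^ (-k : ℝ))
    (hMinv : ∀ ξ : ℝ, 0 < ξ → ξ ≤ 1 → Minv ξ < ν ∧ M (Minv ξ) = ξ)
    (S : ℝ) (hS : 0 < S) (hSS₀ : S ≤ S₀) :
    S₀ * deriv M (Minv (S / S₀)) = (k / ν) * S * (S / S₀) ^ (1 / k : ℝ) := by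
  set ξ : ℝ := S / S₀ with hξ
  have hξ0 : 0 < ξ := div_pos hS hS₀
  have hξ1 : ξ ≤ 1 := (div_le_one hS₀).mpr hSS₀
  obtain ⟨hl, hMl⟩ := hMinv ξ hξ0 hξ1
  set l : ℝ := Minv ξ
  have hu : 0 < 1 - l / ν := by
    have : l / ν < 1 := (div_lt_one hν).mpr hl
    linarith
  -- M agrees with rpow formula on a neighborhood of l
  have hev : M =ᶠ[nhds l] fun x => (1 - x / ν) ^ (-k : ℝ) := by
    filter_upwards [Iio_mem_nhds hl] with x hx
    exact hM x hx
  have hne : (1 - l / ν) ≠ 0 := ne_of_gt hu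
  have hd : HasDerivAt (fun x : ℝ => (1 - x / ν) ^ (-k : ℝ))
      ((-(1 / ν)) * (-k) * (1 - l / ν) ^ ((-k : ℝ) - 1)) l := by
    have h1 : HasDerivAt (fun x : ℝ => 1 - x / ν) (-(1 / ν)) l := by
      simpa using ((hasDerivAt_id l).div_const ν).const_sub 1
    simpa [mul_comm, mul_left_comm, mul_assoc] using
      (h1.rpow_const (p := (-k : ℝ)) (Or.inl hne))
  have hderiv : deriv M l = (k / ν) * (1 - l / ν) ^ ((-k : ℝ) - 1) := by
    rw [Filter.EventuallyEq.deriv_eq hev, hd.deriv]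
    ring
  -- rewrite (1 - l/ν)^(-k) = ξ
  have hMeq : (1 - l / ν) ^ (-k : ℝ) = ξ := by rw [← hM l hl]; exact hMl
  have hsplit : (1 - l / ν) ^ ((-k : ℝ) - 1) = ξ * ξ ^ (1 / k : ℝ) := by
    have h1 : (1 - l / ν) ^ ((-k : ℝ) - 1)
        = (1 - l / ν) ^ (-k : ℝ) * (1 - l / ν) ^ (-1 : ℝ) := by
      rw [← Real.rpow_add hu]; ring_nf
    have h2 : (1 - l / ν) ^ (-1 : ℝ) = ξ ^ (1 / k : ℝ) := by
      rw [← hMeq, ← Real.rpow_mul hu.le,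
        show (-k : ℝ) * (1 / k) = -1 by rw [neg_mul, mul_one_div, div_self hk.ne']]
    rw [h1, hMeq, h2]
  rw [hderiv, hsplit]
  have : S₀ * ξ = S := by rw [hξ]; field_simp
  calc S₀ * (k / ν * (ξ * ξ ^ (1 / k : ℝ)))
      = k / ν * (S₀ * ξ) * ξ ^ (1 / k : ℝ) := by ring
    _ = k / ν * S * ξ ^ (1 / k : ℝ) := by rw [this]
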